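/- Let Q be a probability measure on ℝ^d with compact support Ω_Q, let g: Ω_Q → ℝ be continuous, let c(x, ·) be continuous on Ω_Q for x fixed, and assume y ↦ g(y) - c(x,y) is 2L-Lipschitz and ∫(f(x) + g(y) - c(x,y))₊ dQ(y) = ε. Then there exists y* ∈ Ω_Q with f(x) + g(y*) - c(x,y*) ≥ ε, and for all a, b ∈ [f(x) - ε/2, f(x) + ε/2] with a ≤ b, F(b) - F(a) ≥ Q(B_{ε/(4L)}(y*)) · (b - a), where F(t) := ∫(t + g(y) - c(x,y))₊ dQ(y). -/

import Mathlib

open MeasureTheory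

/-- The topological support of a measure on Euclidean space: points all of whose
neighborhoods (balls) have positive measure. -/
def msupport {d : ℕ} (Q : Measure (EuclideanSpace ℝ (Fin d))) :
    Set (EuclideanSpace ℝ (Fin d)) :=
  {y | ∀ r > 0, 0 < Q (Metric.ball y r)}

theorem stmt9 {d : ℕ} (Q : Measure (EuclideanSpace ℝ (Fin d)))
    [IsProbabilityMeasure Q]
    (hcomp : IsCompact (msupport Q))
    (L ε fx : ℝ) (hL : 0 < L) (hε : 0 < ε)
    (g : EuclideanSpace ℝ (Fin d) → ℝ)
    (c : EuclideanSpace ℝ (Fin d) × EuclideanSpace ℝ (Fin d) → ℝ)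
    (x : EuclideanSpace ℝ (Fin d))
    (hgcont : ContinuousOn g (msupport Q))
    (hccont : ContinuousOn (fun y => c (x, y)) (msupport Q))
    (hLip : ∀ y ∈ msupport Q, ∀ y' ∈ msupport Q,
      |(g y - c (x, y)) - (g y' - c (x, y'))| ≤ 2 * L * ‖y - y'‖)
    (hfoc : ∫ y, max (fx + g y - c (x, y)) 0 ∂Q = ε) :
    ∃ ystar ∈ msupport Q,
      ε ≤ fx + g ystar - c (x, ystar) ∧
      ∀ a b : ℝ, fx - ε / 2 ≤ a → a ≤ b → b ≤ fx + ε / 2 →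
        (Q (Metric.ball ystar (ε / (4 * L)))).toReal * (b - a)
          ≤ (∫ y, max (b + g y - c (x, y)) 0 ∂Q)
            - ∫ y, max (a + g y - c (x, y)) 0 ∂Q := by
  set K := msupport Q with hKdef
  obtain ⟨h, hh⟩ : ∃ h' : EuclideanSpace ℝ (Fin d) → ℝ,
      h' = fun y => g y - c (x, y) := ⟨_, rfl⟩
  have hEq : ∀ t : ℝ,
      (∫ y, max (t + g y - c (x, y)) 0 ∂Q) = ∫ y, max (t + h y) 0 ∂Q := by
    intro t
    simp only [hh, add_sub_assoc]
  have hhcont : ContinuousOn h K := by rw [hh]; exact hgcont.sub hccont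
  have hLip' : ∀ y ∈ K, ∀ y' ∈ K, |h y - h y'| ≤ 2 * L * ‖y - y'‖ := by
    simp only [hh]; exact hLip
  have hfoc' : ∫ y, max (fx + h y) 0 ∂Q = ε := by rw [← hEq fx]; exact hfoc
  -- the complement of the support is null
  have hQKc : Q Kᶜ = 0 := by
    apply measure_null_of_locally_null
    intro y hy
    simp only [hKdef, msupport, Set.mem_compl_iff, Set.mem_setOf_eq, not_forall] at hy
    obtain ⟨r, hr, hr0⟩ := hy
    rw [not_lt, nonpos_iff_eq_zero] at hr0
    exact ⟨Metric.ball y r, mem_nhdsWithin_of_mem_nhds (Metric.ball_mem_nhds y hr), hr0⟩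
  have haeK : ∀ᵐ y ∂Q, y ∈ K := by
    rw [MeasureTheory.ae_iff]
    exact hQKc
  have hrestrict : Q.restrict K = Q := Measure.restrict_eq_self_of_ae_mem haeK
  -- integrability
  have hint : ∀ t : ℝ, Integrable (fun y => max (t + h y) 0) Q := by
    intro t
    have : IntegrableOn (fun y => max (t + h y) 0) K Q :=
      ContinuousOn.integrableOn_compact hcomp
        ((continuous_id.max continuous_const).comp_continuousOn
          (continuousOn_const.add hhcont))
    rwa [IntegrableOn, hrestrict] at this
  -- K is nonempty
  have hKne : K.Nonempty := by
    by_contra hne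
    rw [Set.not_nonempty_iff_eq_empty] at hne
    have : Q Set.univ = 0 := by
      rw [← Set.compl_empty, ← hne]; exact hQKc
    simp [measure_univ] at this
  -- maximizer
  obtain ⟨ystar, hystarK, hmax⟩ := hcomp.exists_isMaxOn hKne hhcont
  have hεyst : ε ≤ fx + h ystar := by
    have hbound : ∀ᵐ y ∂Q, ‖max (fx + h y) 0‖ ≤ max (fx + h ystar) 0 := by
      filter_upwards [haeK] with y hy
      rw [Real.norm_eq_abs, abs_of_nonneg (le_max_right _ _)]
      exact max_le_max ((add_le_add_iff_left fx).mpr (hmax hy)) le_rfl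
    have := norm_integral_le_of_norm_le_const hbound (f := fun y => max (fx + h y) 0)
    rw [hfoc', probReal_univ, mul_one, Real.norm_eq_abs,
      abs_of_pos hε] at this
    rcases le_max_iff.mp this with h1 | h2
    · exact h1
    · linarith
  refine ⟨ystar, hystarK, ?_, ?_⟩
  · have := hεyst
    simp only [hh] at this
    linarith
  · -- main inequality
    intro a b ha hab hb
    set r : ℝ := ε / (4 * L) with hrdef
    set B := Metric.ball ystar r with hBdef
    -- pointwise bound on K
    have hpt : ∀ᵐ y ∂Q,
        B.indicator (fun _ => b - a) y ≤ max (b + h y) 0 - max (a + h y) 0 := by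
      filter_upwards [haeK] with y hy
      by_cases hyB : y ∈ B
      · rw [Set.indicator_of_mem hyB]
        have hdist : ‖y - ystar‖ ≤ r := by
          rw [← dist_eq_norm]
          exact le_of_lt (Metric.mem_ball.mp hyB)
        have hlip := hLip' y hy ystar hystarK
        have h2Lr : 2 * L * r = ε / 2 := by
          rw [hrdef]; field_simp; ring
        have hhy : h ystar - ε / 2 ≤ h y := by
          have habs : |h y - h ystar| ≤ 2 * L * r :=
            le_trans hlip (by nlinarith [norm_nonneg (y - ystar)])
          rw [h2Lr] at habs
          have := abs_le.mp habs
          linarith [this.1]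
        have hha : 0 ≤ a + h y := by linarith
        have hhb : 0 ≤ b + h y := by linarith
        rw [max_eq_left hha, max_eq_left hhb]
        linarith
      · rw [Set.indicator_of_notMem hyB]
        have : max (a + h y) 0 ≤ max (b + h y) 0 :=
          max_le_max ((add_le_add_iff_right _).mpr hab) le_rfl
        linarith
    have hindint : Integrable (B.indicator (fun _ => b - a)) Q :=
      (integrable_const (b - a)).indicator Metric.isOpen_ball.measurableSet
    have hdiff : (∫ y, max (b + h y) 0 ∂Q) - ∫ y, max (a + h y) 0 ∂Q
        = ∫ y, (max (b + h y) 0 - max (a + h y) 0) ∂Q :=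
      (integral_sub (hint b) (hint a)).symm
    have hmono : ∫ y, B.indicator (fun _ => b - a) y ∂Q
        ≤ ∫ y, (max (b + h y) 0 - max (a + h y) 0) ∂Q :=
      integral_mono_ae hindint ((hint b).sub (hint a)) hpt
    have hind : ∫ y, B.indicator (fun _ => b - a) y ∂Q = (Q B).toReal * (b - a) := by
      rw [integral_indicator_const (b - a) Metric.isOpen_ball.measurableSet, smul_eq_mul]; rfl
    rw [hEq a, hEq b]
    calc (Q B).toReal * (b - a) = ∫ y, B.indicator (fun _ => b - a) y ∂Q := hind.symm
      _ ≤ ∫ y, (max (b + h y) 0 - max (a + h y) 0) ∂Q := hmono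
      _ = _ := hdiff.symm
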